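/- The Logarithmic Least Squares problem min over positive w of Σ_{i,j} (ln a_ij − ln(w_i/w_j))² for an n×n PCM A is solved (uniquely up to scalar multiplication) by the geometric mean vector w_i = (∏_{j=1}^n a_ij)^{1/n}. -/

import Mathlib

theorem llsm_geometric_mean_optimal (n : ℕ) (hn : 0 < n)
    (A : Matrix (Fin n) (Fin n) ℝ)
    (hpos : ∀ i j, 0 < A i j) (hrec : ∀ i j, A j i = 1 / A i j)
    (g : Fin n → ℝ) (hg : ∀ i, g i = (∏ j, A i j) ^ ((1 : ℝ) / n)) :
    (∀ w : Fin n → ℝ, (∀ i, 0 < w i) →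
      (∑ i, ∑ j, (Real.log (A i j) - Real.log (g i / g j)) ^ 2) ≤
        ∑ i, ∑ j, (Real.log (A i j) - Real.log (w i / w j)) ^ 2) ∧
    (∀ w : Fin n → ℝ, (∀ i, 0 < w i) →
      (∑ i, ∑ j, (Real.log (A i j) - Real.log (w i / w j)) ^ 2) =
        (∑ i, ∑ j, (Real.log (A i j) - Real.log (g i / g j)) ^ 2) →
      ∃ c : ℝ, 0 < c ∧ ∀ i, w i = c * g i) := by
  have hnR : (n : ℝ) ≠ 0 := Nat.cast_ne_zero.mpr hn.ne'
  have hgpos : ∀ i, 0 < g i := by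
    intro i; rw [hg]
    exact Real.rpow_pos_of_pos (Finset.prod_pos fun j _ => hpos i j) _
  set L : Fin n → Fin n → ℝ := fun i j => Real.log (A i j) with hLdef
  have hL : ∀ i j, L j i = - L i j := by
    intro i j
    simp only [hLdef]
    rw [hrec i j, Real.log_div one_ne_zero (hpos i j).ne', Real.log_one]
    ring
  have hxg : ∀ i, Real.log (g i) = (1 / n) * ∑ j, L i j := by
    intro i
    rw [hg, Real.log_rpow (Finset.prod_pos fun j _ => hpos i j),
      Real.log_prod (fun j _ => (hpos i j).ne')]
  have hS : ∑ i, ∑ j, L i j = 0 := by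
    have h : ∑ i, ∑ j, L i j = - ∑ i, ∑ j, L i j := by
      calc ∑ i, ∑ j, L i j = ∑ j, ∑ i, L i j := Finset.sum_comm
        _ = ∑ j, ∑ i, - L j i := by
            refine Finset.sum_congr rfl fun j _ => Finset.sum_congr rfl fun i _ => ?_
            exact hL j i
        _ = - ∑ i, ∑ j, L i j := by simp
    linarith
  have hsumxg : ∑ i, Real.log (g i) = 0 := by
    simp_rw [hxg, ← Finset.mul_sum, hS, mul_zero]
  set r : Fin n → Fin n → ℝ :=
    fun i j => L i j - Real.log (g i) + Real.log (g j) with hrdef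
  have hrow : ∀ i, ∑ j, r i j = 0 := by
    intro i
    simp only [hrdef]
    rw [Finset.sum_add_distrib, Finset.sum_sub_distrib, Finset.sum_const,
      Finset.card_univ, Fintype.card_fin, hsumxg, hxg]
    field_simp
    rw [nsmul_eq_mul, mul_div_assoc', mul_div_cancel_left₀ _ hnR]
    ring
  have hcol : ∀ j, ∑ i, r i j = 0 := by
    intro j
    have h1 : ∑ i, L i j = - (n * Real.log (g j)) := by
      have : ∑ i, L i j = ∑ i, - L j i := by
        refine Finset.sum_congr rfl fun i _ => hL j i
      rw [this, Finset.sum_neg_distrib, hxg]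
      field_simp
    simp only [hrdef]
    rw [Finset.sum_add_distrib, Finset.sum_sub_distrib, h1, hsumxg,
      Finset.sum_const, Finset.card_univ, Fintype.card_fin]
    ring
  -- decomposition of the objective
  have key : ∀ y : Fin n → ℝ,
      ∑ i, ∑ j, (r i j - (y i - y j)) ^ 2
        = (∑ i, ∑ j, (r i j) ^ 2) + ∑ i, ∑ j, (y i - y j) ^ 2 := by
    intro y
    have h1 : ∑ i, ∑ j, r i j * y i = 0 := by
      have : ∀ i, ∑ j, r i j * y i = 0 := by
        intro i; rw [← Finset.sum_mul, hrow, zero_mul]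
      simp [this]
    have h2 : ∑ i, ∑ j, r i j * y j = 0 := by
      rw [Finset.sum_comm]
      have : ∀ j, ∑ i, r i j * y j = 0 := by
        intro j; rw [← Finset.sum_mul, hcol, zero_mul]
      simp [this]
    have hcross : ∑ i, ∑ j, r i j * (y i - y j) = 0 := by
      simp_rw [mul_sub, Finset.sum_sub_distrib]
      rw [h1, h2, sub_zero]
    have expand : ∀ i j, (r i j - (y i - y j)) ^ 2
        = (r i j) ^ 2 + (y i - y j) ^ 2 - 2 * (r i j * (y i - y j)) := by
      intro i j; ring
    simp_rw [expand, Finset.sum_sub_distrib, Finset.sum_add_distrib,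
      ← Finset.mul_sum]
    rw [hcross]
    ring
  have hterm : ∀ w : Fin n → ℝ, (∀ i, 0 < w i) → ∀ i j,
      Real.log (A i j) - Real.log (w i / w j)
        = r i j - ((Real.log (w i) - Real.log (g i))
            - (Real.log (w j) - Real.log (g j))) := by
    intro w hw i j
    rw [Real.log_div (hw i).ne' (hw j).ne']
    simp only [hrdef, hLdef]
    ring
  have hobj : ∀ w : Fin n → ℝ, (∀ i, 0 < w i) →
      ∑ i, ∑ j, (Real.log (A i j) - Real.log (w i / w j)) ^ 2
        = (∑ i, ∑ j, (r i j) ^ 2)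
          + ∑ i, ∑ j, ((Real.log (w i) - Real.log (g i))
              - (Real.log (w j) - Real.log (g j))) ^ 2 := by
    intro w hw
    have := key (fun i => Real.log (w i) - Real.log (g i))
    simp_rw [hterm w hw]
    exact this
  have hobjg : ∑ i, ∑ j, (Real.log (A i j) - Real.log (g i / g j)) ^ 2
      = ∑ i, ∑ j, (r i j) ^ 2 := by
    rw [hobj g hgpos]
    simp
  constructor
  · intro w hw
    rw [hobj w hw, hobjg]
    have : 0 ≤ ∑ i, ∑ j, ((Real.log (w i) - Real.log (g i))
        - (Real.log (w j) - Real.log (g j))) ^ 2 := by positivity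
    linarith
  · intro w hw heq
    rw [hobj w hw, hobjg] at heq
    have hzero : ∑ i, ∑ j, ((Real.log (w i) - Real.log (g i))
        - (Real.log (w j) - Real.log (g j))) ^ 2 = 0 := by linarith
    have hall : ∀ i j, Real.log (w i) - Real.log (g i)
        = Real.log (w j) - Real.log (g j) := by
      intro i j
      have h1 : ∀ i ∈ Finset.univ, (0:ℝ) ≤ ∑ j, ((Real.log (w i) - Real.log (g i))
          - (Real.log (w j) - Real.log (g j))) ^ 2 := by
        intro i _; positivity
      have h2 := (Finset.sum_eq_zero_iff_of_nonneg h1).mp hzero i (Finset.mem_univ i)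
      have h3 : ∀ j ∈ Finset.univ, (0:ℝ) ≤ ((Real.log (w i) - Real.log (g i))
          - (Real.log (w j) - Real.log (g j))) ^ 2 := by
        intro j _; positivity
      have h4 := (Finset.sum_eq_zero_iff_of_nonneg h3).mp h2 j (Finset.mem_univ j)
      have := pow_eq_zero_iff (n := 2) (by norm_num) |>.mp h4
      linarith
    set i0 : Fin n := ⟨0, hn⟩
    refine ⟨Real.exp (Real.log (w i0) - Real.log (g i0)), Real.exp_pos _, fun i => ?_⟩
    have h5 : Real.log (w i) = (Real.log (w i0) - Real.log (g i0)) + Real.log (g i) := by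
      have := hall i i0; linarith
    calc w i = Real.exp (Real.log (w i)) := (Real.exp_log (hw i)).symm
      _ = Real.exp (Real.log (w i0) - Real.log (g i0)) * Real.exp (Real.log (g i)) := by
          rw [h5, Real.exp_add]
      _ = Real.exp (Real.log (w i0) - Real.log (g i0)) * g i := by
          rw [Real.exp_log (hgpos i)]
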